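/- For every M > 0 there exists κ_M > 0 such that for every nonnegative C¹ function u on [0,1] satisfying |u'(x)| ≤ M ∫₀¹ u for all x ∈ [0,1], one has ∫₀¹ u(x) dx ≤ κ_M ∫₀¹ x u(x) dx. -/

import Mathlib

open MeasureTheory

theorem moment_lower_bound (M : ℝ) (hM : 0 < M) :
    ∃ κ : ℝ, 0 < κ ∧
      ∀ u : ℝ → ℝ, ContDiffOn ℝ 1 u (Set.Icc 0 1) →
        (∀ x ∈ Set.Icc (0 : ℝ) 1, 0 ≤ u x) →
        (∀ x ∈ Set.Icc (0 : ℝ) 1, |derivWithin u (Set.Icc 0 1) x| ≤ M * ∫ y in (0 : ℝ)..1, u y) →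
        (∫ x in (0 : ℝ)..1, u x) ≤ κ * ∫ x in (0 : ℝ)..1, x * u x := by
  refine ⟨4 * (1 + M), by positivity, ?_⟩
  intro u hu hpos hder
  set I : ℝ := ∫ x in (0:ℝ)..1, u x with hI
  set t : ℝ := 1 / (2 * (1 + M)) with ht
  have hM1 : (0:ℝ) < 1 + M := by linarith
  have ht0 : 0 < t := by positivity
  have ht1 : t ≤ 1/2 := by
    rw [ht, div_le_div_iff₀ (by positivity) (by norm_num)]
    nlinarith
  have htIcc : t ∈ Set.Icc (0:ℝ) 1 := ⟨le_of_lt ht0, by linarith⟩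
  have hucont : ContinuousOn u (Set.Icc 0 1) := hu.continuousOn
  -- integrability facts
  have hint : ∀ a b : ℝ, a ∈ Set.Icc (0:ℝ) 1 → b ∈ Set.Icc (0:ℝ) 1 →
      IntervalIntegrable u volume a b := by
    intro a b ha hb
    exact (hucont.mono (Set.uIcc_subset_Icc ha hb)).intervalIntegrable
  have hintx : ∀ a b : ℝ, a ∈ Set.Icc (0:ℝ) 1 → b ∈ Set.Icc (0:ℝ) 1 →
      IntervalIntegrable (fun x => x * u x) volume a b := by
    intro a b ha hb
    exact ((continuousOn_id.mul hucont).mono (Set.uIcc_subset_Icc ha hb)).intervalIntegrable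
  have h01 : (0:ℝ) ∈ Set.Icc (0:ℝ) 1 := by norm_num
  have h11 : (1:ℝ) ∈ Set.Icc (0:ℝ) 1 := by norm_num
  have hInonneg : 0 ≤ I := by
    apply intervalIntegral.integral_nonneg (by norm_num)
    intro x hx; exact hpos x hx
  set L : ℝ := M * I with hL
  have hLnonneg : 0 ≤ L := mul_nonneg hM.le hInonneg
  -- mean value: |u x - u y| ≤ L
  have hlip : ∀ x ∈ Set.Icc (0:ℝ) 1, ∀ y ∈ Set.Icc (0:ℝ) 1, u x ≤ u y + L := by
    intro x hx y hy
    have := (convex_Icc (0:ℝ) 1).norm_image_sub_le_of_norm_derivWithin_le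
      (hu.differentiableOn one_ne_zero) (fun z hz => hder z hz) hy hx
    have hxy : |x - y| ≤ 1 := by
      rw [abs_le]; constructor <;> [linarith [hx.1, hy.2]; linarith [hx.2, hy.1]]
    have h1 : u x - u y ≤ |u x - u y| := le_abs_self _
    have h2 : ‖u x - u y‖ = |u x - u y| := rfl
    have h3 : ‖x - y‖ = |x - y| := rfl
    rw [h2, h3] at this
    nlinarith [abs_nonneg (x - y)]
  -- pointwise bound u x ≤ I + L
  have hbound : ∀ x ∈ Set.Icc (0:ℝ) 1, u x ≤ I + L := by
    intro x hx
    have : u x = ∫ y in (0:ℝ)..1, u x := by simp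
    rw [this]
    have : (∫ y in (0:ℝ)..1, (u y + L)) = I + L := by
      rw [intervalIntegral.integral_add (hint 0 1 h01 h11) intervalIntegrable_const]
      simp [hI]
    rw [← this]
    apply intervalIntegral.integral_mono_on (by norm_num)
      intervalIntegrable_const
      ((hint 0 1 h01 h11).add intervalIntegrable_const)
    intro y hy; exact hlip x hx y hy
  -- ∫₀^t u ≤ (I+L) t
  have hsmall : (∫ x in (0:ℝ)..t, u x) ≤ (I + L) * t := by
    have : (∫ x in (0:ℝ)..t, (I + L)) = (I + L) * t := by
      rw [intervalIntegral.integral_const]; rw [hL]; ring_nf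
    rw [← this]
    apply intervalIntegral.integral_mono_on ht0.le (hint 0 t h01 htIcc)
      intervalIntegrable_const
    intro x hx
    exact hbound x ⟨hx.1, le_trans hx.2 htIcc.2⟩
  -- ∫_t^1 u ≥ I - (I+L) t
  have hsplit : (∫ x in (0:ℝ)..t, u x) + (∫ x in t..1, u x) = I := by
    rw [hI]; exact intervalIntegral.integral_add_adjacent_intervals
      (hint 0 t h01 htIcc) (hint t 1 htIcc h11)
  have htail : I - (I + L) * t ≤ ∫ x in t..1, u x := by linarith
  -- ∫₀¹ x u ≥ t * ∫_t^1 u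
  have hxsplit : (∫ x in (0:ℝ)..t, x * u x) + (∫ x in t..1, x * u x)
      = ∫ x in (0:ℝ)..1, x * u x := intervalIntegral.integral_add_adjacent_intervals
      (hintx 0 t h01 htIcc) (hintx t 1 htIcc h11)
  have hx1 : 0 ≤ ∫ x in (0:ℝ)..t, x * u x := by
    apply intervalIntegral.integral_nonneg ht0.le
    intro x hx
    exact mul_nonneg hx.1 (hpos x ⟨hx.1, le_trans hx.2 htIcc.2⟩)
  have hx2 : t * ∫ x in t..1, u x ≤ ∫ x in t..1, x * u x := by
    rw [← intervalIntegral.integral_const_mul]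
    apply intervalIntegral.integral_mono_on (by linarith)
      ((hint t 1 htIcc h11).const_mul t) (hintx t 1 htIcc h11)
    intro x hx
    exact mul_le_mul_of_nonneg_right hx.1 (hpos x ⟨le_trans ht0.le hx.1, hx.2⟩)
  have hmono : t * (I - (I + L) * t) ≤ t * ∫ x in t..1, u x :=
    mul_le_mul_of_nonneg_left htail ht0.le
  have hkey : t * (I - (I + L) * t) ≤ ∫ x in (0:ℝ)..1, x * u x := by
    linarith
  -- compute: t * (I - (I+L) t) = I / (4 (1+M))
  have hcalc : t * (I - (I + L) * t) = I / (4 * (1 + M)) := by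
    rw [ht, hL]
    field_simp
    ring
  rw [hcalc] at hkey
  rw [div_le_iff₀ (by positivity)] at hkey
  linarith [hkey]
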